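/- The lattice of normal subgroups of ZM(m,n,r) is distributive. -/

import Mathlib

def ZMrels (m n : ℕ) (r : ℤ) : Set (FreeGroup Bool) :=
  {FreeGroup.of true ^ m, FreeGroup.of false ^ n,
   (FreeGroup.of false)⁻¹ * FreeGroup.of true * FreeGroup.of false * (FreeGroup.of true) ^ (-r)}

abbrev ZM (m n : ℕ) (r : ℤ) : Type := PresentedGroup (ZMrels m n r)

def ZMa (m n : ℕ) (r : ℤ) : ZM m n r := PresentedGroup.of true

def ZMb (m n : ℕ) (r : ℤ) : ZM m n r := PresentedGroup.of false

/-! ### Arithmetic helpers -/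

section ArithHelpers

lemma ZMwork.natDistrib (a b c : ℕ) :
    Nat.gcd (Nat.lcm a b) (Nat.lcm a c) ∣ Nat.lcm a (Nat.gcd b c) := by
  rcases eq_or_ne a 0 with rfl | ha
  · simp
  rcases eq_or_ne b 0 with rfl | hb
  · simp [Nat.lcm_comm]
  rcases eq_or_ne c 0 with rfl | hc
  · simp
  have hlab : Nat.lcm a b ≠ 0 := Nat.lcm_ne_zero ha hb
  have hlac : Nat.lcm a c ≠ 0 := Nat.lcm_ne_zero ha hc
  have hgbc : Nat.gcd b c ≠ 0 := fun h => hb (Nat.eq_zero_of_gcd_eq_zero_left h)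
  have h1 : Nat.gcd (Nat.lcm a b) (Nat.lcm a c) = Nat.lcm a (Nat.gcd b c) := by
    have hg : Nat.gcd (Nat.lcm a b) (Nat.lcm a c) ≠ 0 := fun h =>
      hlab (Nat.eq_zero_of_gcd_eq_zero_left h)
    have hl : Nat.lcm a (Nat.gcd b c) ≠ 0 := Nat.lcm_ne_zero ha hgbc
    apply Nat.factorization_inj hg hl
    rw [Nat.factorization_gcd hlab hlac, Nat.factorization_lcm ha hb,
      Nat.factorization_lcm ha hc, Nat.factorization_lcm ha hgbc,
      Nat.factorization_gcd hb hc]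
    ext p
    simp only [Finsupp.inf_apply, Finsupp.sup_apply]
    exact (max_min_distrib_left _ _ _).symm
  exact h1.dvd

/-- the key arithmetic decomposition -/
lemma ZMwork.int_split {dX dY dZ k c1 c2 : ℤ} (hX : dX ∣ k) (hk : k = c1 * dY + c2 * dZ) :
    ∃ p q : ℤ, k = p + q ∧ dX ∣ p ∧ dY ∣ p ∧ dX ∣ q ∧ dZ ∣ q := by
  set L1 : ℕ := Int.lcm dX dY with hL1
  set L2 : ℕ := Int.lcm dX dZ with hL2
  set g : ℕ := Nat.gcd L1 L2 with hg
  have hgk : (g : ℤ) ∣ k := by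
    have h1 : (Int.lcm dX (Int.gcd dY dZ) : ℤ) ∣ k := by
      apply Int.coe_lcm_dvd hX
      have : (Int.gcd dY dZ : ℤ) ∣ c1 * dY + c2 * dZ :=
        dvd_add ((Int.gcd_dvd_left _ _).mul_left c1) ((Int.gcd_dvd_right _ _).mul_left c2)
      rw [hk]; exact this
    have h2 : (g : ℤ) ∣ (Int.lcm dX (Int.gcd dY dZ) : ℤ) := by
      have := ZMwork.natDistrib dX.natAbs dY.natAbs dZ.natAbs
      have heq : Int.lcm dX (Int.gcd dY dZ) = Nat.lcm dX.natAbs (Nat.gcd dY.natAbs dZ.natAbs) := by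
        unfold Int.lcm
        congr 1
      rw [heq]
      exact_mod_cast Int.natCast_dvd_natCast.mpr this
    exact h2.trans h1
  rcases eq_or_ne (g : ℤ) 0 with hg0 | hg0
  · have hk0 : k = 0 := by
      rw [hg0] at hgk; exact zero_dvd_iff.mp hgk
    exact ⟨0, 0, by simp [hk0], dvd_zero _, dvd_zero _, dvd_zero _, dvd_zero _⟩
  · obtain ⟨w, hw⟩ := hgk
    have hbez : (g : ℤ) = L1 * Nat.gcdA L1 L2 + L2 * Nat.gcdB L1 L2 := Nat.gcd_eq_gcd_ab L1 L2
    refine ⟨w * (L1 * Nat.gcdA L1 L2), w * (L2 * Nat.gcdB L1 L2), ?_, ?_, ?_, ?_, ?_⟩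
    · rw [hw, ← mul_add, ← hbez]; ring
    · exact dvd_mul_of_dvd_right ((Int.dvd_lcm_left _ _).mul_right _) w
    · exact dvd_mul_of_dvd_right ((Int.dvd_lcm_right _ _).mul_right _) w
    · exact dvd_mul_of_dvd_right ((Int.dvd_lcm_left _ _).mul_right _) w
    · exact dvd_mul_of_dvd_right ((Int.dvd_lcm_right _ _).mul_right _) w

end ArithHelpers

/-! ### Group-theoretic helpers -/

section GroupHelpers

variable {G : Type*} [Group G]

open Subgroup

lemma ZMwork.zpow_congr_of_dvd {x : G} {m : ℕ} (hx : x ^ (m:ℤ) = 1) {i k : ℤ}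
    (h : (m:ℤ) ∣ i - k) : x ^ i = x ^ k := by
  obtain ⟨t, ht⟩ := h
  have : x ^ i = x ^ (k + m * t) := by rw [← ht]; ring_nf
  rw [this, zpow_add, zpow_mul, hx, one_zpow, mul_one]

lemma ZMwork.zpow_eq_one_of_dvd {x : G} {m : ℕ} (hx : x ^ (m:ℤ) = 1) {i : ℤ}
    (h : (m:ℤ) ∣ i) : x ^ i = 1 := by
  have := ZMwork.zpow_congr_of_dvd hx (k := 0) (by simpa using h)
  simpa using this

lemma ZMwork.conj_zpow' {x y : G} (k : ℤ) : (x⁻¹ * y * x) ^ k = x⁻¹ * y ^ k * x := by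
  simpa using conj_zpow (i := k) (a := x⁻¹) (b := y)

/-- every subgroup pulls back along powers of c to an ideal of ℤ -/
lemma ZMwork.exists_gen (c : G) (W : Subgroup G) : ∃ d : ℤ, ∀ k : ℤ, (c ^ k ∈ W ↔ d ∣ k) := by
  set S : AddSubgroup ℤ :=
    { carrier := {k : ℤ | c ^ k ∈ W}
      zero_mem' := by simp [W.one_mem]
      add_mem' := by
        intro x y hx hy
        simp only [Set.mem_setOf_eq, zpow_add] at *
        exact W.mul_mem hx hy
      neg_mem' := by
        intro x hx
        simp only [Set.mem_setOf_eq, zpow_neg] at *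
        exact W.inv_mem hx } with hS
  obtain ⟨d, hd⟩ := Int.subgroup_cyclic S
  refine ⟨d, fun k => ?_⟩
  have hmem : c ^ k ∈ W ↔ k ∈ S := Iff.rfl
  rw [hmem, hd, AddSubgroup.mem_closure_singleton]
  constructor
  · rintro ⟨t, rfl⟩; exact Dvd.intro_left t rfl
  · rintro ⟨t, rfl⟩; exact ⟨t, by rw [zsmul_eq_mul]; push_cast; ring⟩

lemma ZMwork.mem_sup_of_comm {Y Z : Subgroup G} (c : G) (hY : Y ≤ zpowers c)
    (hZ : Z ≤ zpowers c) {g : G} (hg : g ∈ Y ⊔ Z) : ∃ y ∈ Y, ∃ z ∈ Z, g = y * z := by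
  have comm : ∀ u v : G, u ∈ zpowers c → v ∈ zpowers c → u * v = v * u := by
    rintro u v hu hv
    obtain ⟨p, rfl⟩ := mem_zpowers_iff.mp hu
    obtain ⟨q, rfl⟩ := mem_zpowers_iff.mp hv
    rw [← zpow_add, ← zpow_add, add_comm]
  set S : Subgroup G :=
    { carrier := {g : G | ∃ y ∈ Y, ∃ z ∈ Z, g = y * z}
      one_mem' := ⟨1, Y.one_mem, 1, Z.one_mem, (mul_one 1).symm⟩
      mul_mem' := by
        rintro x x' ⟨y, hy, z, hz, rfl⟩ ⟨y', hy', z', hz', rfl⟩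
        refine ⟨y * y', Y.mul_mem hy hy', z * z', Z.mul_mem hz hz', ?_⟩
        have hc := comm z y' (hZ hz) (hY hy')
        calc y * z * (y' * z') = y * (z * y') * z' := by group
          _ = y * (y' * z) * z' := by rw [hc]
          _ = y * y' * (z * z') := by group
      inv_mem' := by
        rintro x ⟨y, hy, z, hz, rfl⟩
        refine ⟨y⁻¹, Y.inv_mem hy, z⁻¹, Z.inv_mem hz, ?_⟩
        have hc := comm z⁻¹ y⁻¹ (hZ (Z.inv_mem hz)) (hY (Y.inv_mem hy))
        rw [mul_inv_rev, hc] } with hSdef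
  have hle : Y ⊔ Z ≤ S := by
    apply sup_le
    · intro y hy; exact ⟨y, hy, 1, Z.one_mem, (mul_one y).symm⟩
    · intro z hz; exact ⟨1, Y.one_mem, z, hz, (one_mul z).symm⟩
  exact hle hg

/-- distributivity for subgroups inside a cyclic subgroup -/
lemma ZMwork.distrib_zpowers (c : G) {X Y Z : Subgroup G} (hX : X ≤ zpowers c)
    (hY : Y ≤ zpowers c) (hZ : Z ≤ zpowers c) : X ⊓ (Y ⊔ Z) ≤ (X ⊓ Y) ⊔ (X ⊓ Z) := by
  obtain ⟨dX, hdX⟩ := ZMwork.exists_gen c X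
  obtain ⟨dY, hdY⟩ := ZMwork.exists_gen c Y
  obtain ⟨dZ, hdZ⟩ := ZMwork.exists_gen c Z
  rintro g ⟨hgX, hgYZ⟩
  obtain ⟨y, hy, z, hz, rfl⟩ := ZMwork.mem_sup_of_comm c hY hZ hgYZ
  obtain ⟨k, hk⟩ := mem_zpowers_iff.mp (hX hgX)
  obtain ⟨v, hv⟩ := mem_zpowers_iff.mp (hZ hz)
  have hyck : c ^ (k - v) ∈ Y := by
    have : c ^ (k - v) = y := by
      rw [zpow_sub, hk, hv]
      group
    rw [this]; exact hy
  have hdvd1 : dX ∣ k := by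
    rw [← hdX]
    rw [hk]; exact hgX
  have hdvd2 : dY ∣ (k - v) := (hdY (k-v)).mp hyck
  have hdvd3 : dZ ∣ v := (hdZ v).mp (by rw [hv]; exact hz)
  obtain ⟨c1, hc1⟩ := hdvd2
  obtain ⟨c2, hc2⟩ := hdvd3
  have hksum : k = c1 * dY + c2 * dZ := by
    have hkvv : k = (k - v) + v := by ring
    rw [hkvv, hc1, hc2]; ring
  obtain ⟨p, q, hpq, hXp, hYp, hXq, hZq⟩ := ZMwork.int_split hdvd1 hksum
  have hyz : y * z = c ^ p * c ^ q := by
    rw [← zpow_add, ← hpq, hk]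
  rw [hyz]
  exact Subgroup.mul_mem _
    (Subgroup.mem_sup_left ⟨(hdX p).mpr hXp, (hdY p).mpr hYp⟩)
    (Subgroup.mem_sup_right ⟨(hdX q).mpr hXq, (hdZ q).mpr hZq⟩)

end GroupHelpers

/-! ### Abstract conjugation lemmas -/

section Conj

variable {G : Type*} [Group G] {a b : G} {m n : ℕ} {r : ℤ}

variable (ha : a ^ (m:ℤ) = 1) (hc : b⁻¹ * a * b = a ^ r)
    (hrn : (m:ℤ) ∣ r ^ n - 1) (hn : 0 < n)

include hc in
lemma ZMwork.conj_pos (i : ℤ) : ∀ j : ℕ, (b ^ j)⁻¹ * a ^ i * b ^ j = a ^ (i * r ^ j) := by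
  intro j
  induction j with
  | zero => simp
  | succ j ih =>
      rw [pow_succ, mul_inv_rev]
      calc b⁻¹ * (b^j)⁻¹ * a ^ i * (b ^ j * b)
          = b⁻¹ * ((b^j)⁻¹ * a ^ i * b ^ j) * b := by group
        _ = b⁻¹ * a ^ (i * r ^ j) * b := by rw [ih]
        _ = (b⁻¹ * a * b) ^ (i * r ^ j) := by rw [ZMwork.conj_zpow']
        _ = a ^ (i * r ^ (j+1)) := by rw [hc, ← zpow_mul]; ring_nf

include ha hc hrn hn in
lemma ZMwork.conj_neg_one (i : ℤ) : b * a ^ i * b⁻¹ = a ^ (i * r ^ (n-1)) := by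
  have key : b⁻¹ * a ^ (i * r ^ (n-1)) * b = a ^ i := by
    rw [← ZMwork.conj_zpow', hc, ← zpow_mul]
    apply ZMwork.zpow_congr_of_dvd ha
    have hrr : r * r ^ (n-1) = r ^ n := by
      rw [← pow_succ']
      congr 1
      omega
    calc (m:ℤ) ∣ (r ^ n - 1) * i := Dvd.dvd.mul_right hrn i
      _ = r * (i * r ^ (n-1)) - i := by rw [← hrr]; ring
  calc b * a ^ i * b⁻¹ = b * (b⁻¹ * a ^ (i * r ^ (n-1)) * b) * b⁻¹ := by rw [key]
    _ = a ^ (i * r ^ (n-1)) := by group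

include ha hc hrn hn in
lemma ZMwork.conj_neg : ∀ (j : ℕ) (i : ℤ),
    b ^ j * a ^ i * (b ^ j)⁻¹ = a ^ (i * (r ^ (n-1)) ^ j) := by
  intro j
  induction j with
  | zero => simp
  | succ j ih =>
      intro i
      rw [pow_succ, mul_inv_rev]
      calc b ^ j * b * a ^ i * (b⁻¹ * (b ^ j)⁻¹)
          = b ^ j * (b * a ^ i * b⁻¹) * (b ^ j)⁻¹ := by group
        _ = b ^ j * a ^ (i * r ^ (n-1)) * (b ^ j)⁻¹ := by
            rw [ZMwork.conj_neg_one ha hc hrn hn]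
        _ = a ^ (i * r ^ (n-1) * (r ^ (n-1)) ^ j) := ih _
        _ = a ^ (i * (r ^ (n-1)) ^ (j+1)) := by congr 1; ring

include ha hc hrn hn in
/-- conjugation of a-powers by arbitrary b-powers, with mod-m-invertible multiplier -/
lemma ZMwork.conj_gen (j : ℤ) : ∃ s t : ℤ,
    (∀ i : ℤ, b ^ j * a ^ i * b ^ (-j) = a ^ (i * s)) ∧ (m:ℤ) ∣ s * t - 1 := by
  have hdvd : ∀ k : ℕ, (m:ℤ) ∣ (r ^ n) ^ k - 1 := by
    intro k
    have h1 : ((r ^ n) - 1) ∣ (r ^ n) ^ k - 1 := by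
      simpa using sub_dvd_pow_sub_pow (r ^ n) 1 k
    exact hrn.trans h1
  rcases Int.natAbs_eq j with hj | hj
  all_goals rw [hj]; set k := j.natAbs with hk
  · refine ⟨(r ^ (n-1)) ^ k, r ^ k, fun i => ?_, ?_⟩
    · rw [zpow_neg, zpow_natCast]
      exact ZMwork.conj_neg ha hc hrn hn k i
    · have h2 : (r ^ (n-1)) ^ k * r ^ k = (r ^ n) ^ k := by
        rw [← mul_pow, ← pow_succ]
        congr 2
        omega
      rw [h2]; exact hdvd _
  · refine ⟨r ^ k, (r ^ (n-1)) ^ k, fun i => ?_, ?_⟩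
    · have h3 := ZMwork.conj_pos hc i k
      rw [zpow_neg, zpow_natCast, neg_neg, zpow_natCast]
      exact h3
    · have h2 : r ^ k * (r ^ (n-1)) ^ k = (r ^ n) ^ k := by
        rw [← mul_pow, ← pow_succ']
        congr 2
        omega
      rw [h2]; exact hdvd _

end Conj

/-! ### Relations in ZM -/

namespace ZMwork

variable {m n : ℕ} {r : ℤ}

local notation "a" => ZMa m n r
local notation "b" => ZMb m n r

open Pointwise

lemma mk_rel {x : FreeGroup Bool} (hx : x ∈ ZMrels m n r) :
    PresentedGroup.mk (ZMrels m n r) x = 1 := by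
  have : x ∈ Subgroup.normalClosure (ZMrels m n r) := Subgroup.subset_normalClosure hx
  exact (QuotientGroup.eq_one_iff x).2 this

lemma rel_a : a ^ (m : ℤ) = 1 := by
  have h := mk_rel (m := m) (n := n) (r := r) (Or.inl rfl)
  rw [map_pow] at h
  rw [zpow_natCast]
  exact h

lemma rel_b : b ^ (n : ℤ) = 1 := by
  have h := mk_rel (m := m) (n := n) (r := r) (Or.inr (Or.inl rfl))
  rw [map_pow] at h
  rw [zpow_natCast]
  exact h

lemma rel_c : b⁻¹ * a * b = a ^ r := by
  have h := mk_rel (m := m) (n := n) (r := r) (Or.inr (Or.inr rfl))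
  rw [map_mul, map_mul, map_mul, map_zpow, map_inv] at h
  have h2 : (b⁻¹ * a * b) * (a ^ r)⁻¹ = 1 := by
    rw [← zpow_neg]; exact h
  exact mul_inv_eq_one.mp h2

/-! ### Concrete representations -/

/-- translation permutations of ZMod m -/
def tr (m : ℕ) : Multiplicative (ZMod m) →* Equiv.Perm (ZMod m) where
  toFun c := Equiv.addLeft c.toAdd
  map_one' := by ext x; simp
  map_mul' c d := by ext x; simp [Equiv.Perm.mul_apply, add_assoc]

/-- multiplication permutations of ZMod m -/
def ml (m : ℕ) : (ZMod m)ˣ →* Equiv.Perm (ZMod m) := MulAction.toPermHom _ _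

lemma rbar_pow (hr : (m:ℤ) ∣ r ^ n - 1) : ((r : ZMod m))^n = 1 := by
  have h : ((r ^ n - 1 : ℤ) : ZMod m) = 0 := by
    rw [ZMod.intCast_zmod_eq_zero_iff_dvd]; exact hr
  push_cast at h
  linear_combination h

/-- the class of r as a unit of ZMod m -/
def vunit (hn : 0 < n) (hr : (m:ℤ) ∣ r ^ n - 1) : (ZMod m)ˣ where
  val := (r : ZMod m)
  inv := (r : ZMod m) ^ (n - 1)
  val_inv := by
    rw [← pow_succ']
    have h1 : n - 1 + 1 = n := by omega
    rw [h1]; exact rbar_pow hr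
  inv_val := by
    rw [← pow_succ]
    have h1 : n - 1 + 1 = n := by omega
    rw [h1]; exact rbar_pow hr

lemma vunit_pow_n (hn : 0 < n) (hr : (m:ℤ) ∣ r ^ n - 1) : (vunit hn hr) ^ n = 1 := by
  ext
  rw [Units.val_pow_eq_pow_val]
  exact rbar_pow hr

lemma tr_zpow (i : ℤ) :
    (tr m (Multiplicative.ofAdd 1)) ^ i = tr m (Multiplicative.ofAdd (i : ZMod m)) := by
  rw [← map_zpow, ← ofAdd_zsmul, zsmul_eq_mul, mul_one]

lemma tr_apply (c x : ZMod m) : tr m (Multiplicative.ofAdd c) x = c + x := rfl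

lemma ml_apply (u : (ZMod m)ˣ) (x : ZMod m) : ml m u x = (u : ZMod m) * x := rfl

/-- the permutation representation -/
noncomputable def Phi (hn : 0 < n) (hr : (m:ℤ) ∣ r ^ n - 1) :
    ZM m n r →* Equiv.Perm (ZMod m) := by
  apply PresentedGroup.toGroup
    (f := fun x => if x then tr m (Multiplicative.ofAdd 1) else ml m (vunit hn hr)⁻¹)
  intro w hw
  rcases hw with hw | hw | hw
  all_goals subst hw
  · rw [map_pow, FreeGroup.lift_apply_of]
    simp only [if_true]
    rw [← zpow_natCast, tr_zpow]
    have h0 : ((m : ℤ) : ZMod m) = 0 := by push_cast; exact ZMod.natCast_self m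
    rw [h0, ofAdd_zero, map_one]
  · rw [map_pow, FreeGroup.lift_apply_of]
    simp only [if_false, Bool.false_eq_true]
    rw [← map_pow, inv_pow, vunit_pow_n hn hr, inv_one, map_one]
  · rw [map_mul, map_mul, map_mul, map_inv, map_zpow, FreeGroup.lift_apply_of, FreeGroup.lift_apply_of]
    simp only [if_true, if_false, Bool.false_eq_true]
    rw [tr_zpow]
    ext x
    simp only [Equiv.Perm.mul_apply, Equiv.Perm.one_apply]
    rw [← map_inv, inv_inv]
    rw [tr_apply, ml_apply, tr_apply, ml_apply]
    show ((vunit hn hr : ZMod m)) * (1 + ((vunit hn hr)⁻¹ : (ZMod m)ˣ) * ((-r : ℤ) + x)) = x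
    rw [mul_add, ← mul_assoc]
    rw [Units.mul_inv]
    show (r : ZMod m) * 1 + 1 * (((-r : ℤ) : ZMod m) + x) = x
    push_cast
    ring

lemma Phi_a (hn : 0 < n) (hr : (m:ℤ) ∣ r ^ n - 1) :
    Phi hn hr a = tr m (Multiplicative.ofAdd 1) := by
  unfold Phi ZMa
  rw [PresentedGroup.toGroup.of]
  simp

lemma Phi_b (hn : 0 < n) (hr : (m:ℤ) ∣ r ^ n - 1) :
    Phi hn hr b = ml m (vunit hn hr)⁻¹ := by
  unfold Phi ZMb
  rw [PresentedGroup.toGroup.of]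
  simp

/-- the abelianized representation -/
noncomputable def Chi (m n : ℕ) (r : ℤ) : ZM m n r →* Multiplicative (ZMod n) := by
  apply PresentedGroup.toGroup (f := fun x => if x then 1 else Multiplicative.ofAdd 1)
  intro w hw
  rcases hw with hw | hw | hw
  all_goals subst hw
  · rw [map_pow, FreeGroup.lift_apply_of]
    simp
  · rw [map_pow, FreeGroup.lift_apply_of]
    simp only [if_false, Bool.false_eq_true]
    rw [← ofAdd_nsmul]
    simp
  · rw [map_mul, map_mul, map_mul, map_inv, map_zpow, FreeGroup.lift_apply_of, FreeGroup.lift_apply_of]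
    simp

lemma Chi_a : Chi m n r a = 1 := by
  unfold Chi ZMa
  rw [PresentedGroup.toGroup.of]
  simp

lemma Chi_b : Chi m n r b = Multiplicative.ofAdd 1 := by
  unfold Chi ZMb
  rw [PresentedGroup.toGroup.of]
  simp

/-! ### Injectivity facts -/

variable (hn : 0 < n) (hr : (m:ℤ) ∣ r ^ n - 1)

include hn hr in
lemma apow_one_iff (i : ℤ) : a ^ i = 1 ↔ (m:ℤ) ∣ i := by
  constructor
  · intro h
    have h2 := congrArg (Phi hn hr) h
    rw [map_zpow, map_one, Phi_a, tr_zpow] at h2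
    have h3 := congrArg (fun σ : Equiv.Perm (ZMod m) => σ 0) h2
    simp only [Equiv.Perm.one_apply] at h3
    rw [tr_apply, add_zero] at h3
    exact (ZMod.intCast_zmod_eq_zero_iff_dvd i m).mp h3
  · exact zpow_eq_one_of_dvd rel_a

lemma bdvd_of_mix {i j : ℤ} (h : a ^ i * b ^ j = 1) : (n:ℤ) ∣ j := by
  have h2 := congrArg (Chi m n r) h
  rw [map_mul, map_zpow, map_zpow, Chi_a, Chi_b, ← ofAdd_zsmul, zsmul_eq_mul, mul_one,
    map_one] at h2
  have h3 : (j : ZMod n) = 0 := by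
    have := congrArg Multiplicative.toAdd h2
    simpa using this
  exact (ZMod.intCast_zmod_eq_zero_iff_dvd j n).mp h3

lemma mix_one {i j : ℤ} (h : a ^ i * b ^ j = 1) : a ^ i = 1 ∧ b ^ j = 1 := by
  have hj := bdvd_of_mix h
  have hbj : b ^ j = 1 := zpow_eq_one_of_dvd rel_b hj
  rw [hbj, mul_one] at h
  exact ⟨h, hbj⟩

/-! ### Normal form -/

include hn hr in
lemma normal_form (g : ZM m n r) : ∃ i j : ℤ, g = a ^ i * b ^ j := by
  set S : Subgroup (ZM m n r) :=
    { carrier := {g : ZM m n r | ∃ i j : ℤ, g = a ^ i * b ^ j}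
      one_mem' := ⟨0, 0, by simp⟩
      mul_mem' := by
        rintro x y ⟨i, j, rfl⟩ ⟨k, l, rfl⟩
        obtain ⟨s, t, hconj, -⟩ := ZMwork.conj_gen rel_a rel_c hr hn j
        refine ⟨i + k * s, j + l, ?_⟩
        calc a^i * b^j * (a^k * b^l) = a^i * (b^j * a^k * b^(-j)) * b^(j+l) := by group
          _ = a^i * a^(k*s) * b^(j+l) := by rw [hconj]
          _ = a^(i+k*s) * b^(j+l) := by rw [← zpow_add]
      inv_mem' := by
        rintro x ⟨i, j, rfl⟩
        obtain ⟨s, t, hconj, -⟩ := ZMwork.conj_gen rel_a rel_c hr hn (-j)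
        refine ⟨-i * s, -j, ?_⟩
        calc (a^i * b^j)⁻¹ = (b^(-j) * a^(-i) * b^(-(-j))) * b^(-j) := by group
          _ = a^(-i*s) * b^(-j) := by rw [hconj (-i)] } with hSdef
  have : g ∈ S := by
    apply PresentedGroup.generated_by (ZMrels m n r) S
    intro x
    cases x
    · exact ⟨0, 1, by rw [zpow_zero, zpow_one, one_mul]; rfl⟩
    · exact ⟨1, 0, by rw [zpow_one, zpow_zero, mul_one]; rfl⟩
  exact this


/-! ### Structure of normal subgroups -/

variable (hco2 : IsCoprime (m : ℤ) (r - 1))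

include hn hr hco2 in
lemma mem_parts {N : Subgroup (ZM m n r)} (hN : N.Normal) {i j : ℤ}
    (h : a ^ i * b ^ j ∈ N) : a ^ i ∈ N ∧ b ^ j ∈ N := by
  have hconj1 : b⁻¹ * a ^ i * b = a ^ (r * i) := by
    rw [← ZMwork.conj_zpow', rel_c, ← zpow_mul]
  obtain ⟨s, t, hconj, hst⟩ := ZMwork.conj_gen rel_a rel_c hr hn (-j)
  have hy : (a^i*b^j)⁻¹ * (b⁻¹ * (a^i*b^j) * b) ∈ N := by
    apply N.mul_mem (N.inv_mem h)
    have hcc := hN.conj_mem _ h b⁻¹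
    simpa using hcc
  have hyval : (a^i*b^j)⁻¹ * (b⁻¹ * (a^i*b^j) * b) = a ^ ((i * (r-1)) * s) := by
    have h1 : b⁻¹ * (a^i*b^j) * b = a ^ (r*i) * b ^ j := by
      calc b⁻¹ * (a^i*b^j) * b = (b⁻¹ * a^i * b) * (b⁻¹ * b^j * b) := by group
        _ = a ^ (r*i) * b ^ j := by rw [hconj1]; congr 1; group
    rw [h1]
    have e1 : a^(-i : ℤ) * a^(r*i) = a^(i*(r-1)) := by rw [← zpow_add]; congr 1; ring
    calc (a^i*b^j)⁻¹ * (a ^ (r*i) * b ^ j)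
        = b^(-j) * (a^(-i:ℤ) * a^(r*i)) * b^j := by
          rw [zpow_neg, zpow_neg]; group
      _ = b^(-j) * a^(i*(r-1)) * b^(-(-j)) := by rw [e1, neg_neg]
      _ = a ^ ((i * (r-1)) * s) := hconj _
  rw [hyval] at hy
  obtain ⟨x, u, hxu⟩ := hco2
  have hu : (m:ℤ) ∣ (r-1)*u - 1 := ⟨-x, by linear_combination hxu⟩
  have h5 : (m:ℤ) ∣ ((r-1)*u*(s*t) - 1) := by
    obtain ⟨p1, hp1⟩ := hu
    obtain ⟨p2, hp2⟩ := hst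
    exact ⟨p1*(s*t)+p2, by linear_combination (s*t)*hp1 + hp2⟩
  have hzz : (a ^ ((i * (r-1)) * s)) ^ (t*u) ∈ N := N.zpow_mem hy _
  rw [← zpow_mul] at hzz
  have heq : a ^ ((i * (r-1)) * s * (t*u)) = a ^ i := by
    apply ZMwork.zpow_congr_of_dvd rel_a
    obtain ⟨p, hp⟩ := h5
    exact ⟨i*p, by linear_combination i*hp⟩
  rw [heq] at hzz
  refine ⟨hzz, ?_⟩
  have hbj := N.mul_mem (N.inv_mem hzz) h
  have : (a^i)⁻¹ * (a^i * b^j) = b^j := by group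
  rwa [this] at hbj

include hn hr hco2 in
lemma decomp {N : Subgroup (ZM m n r)} (hN : N.Normal) :
    N = (N ⊓ Subgroup.zpowers a) ⊔ (N ⊓ Subgroup.zpowers b) := by
  apply le_antisymm
  · intro g hg
    obtain ⟨i, j, rfl⟩ := normal_form hn hr g
    obtain ⟨hai, hbj⟩ := mem_parts hn hr hco2 hN hg
    exact Subgroup.mul_mem _
      (Subgroup.mem_sup_left ⟨hai, Subgroup.mem_zpowers_iff.mpr ⟨i, rfl⟩⟩)
      (Subgroup.mem_sup_right ⟨hbj, Subgroup.mem_zpowers_iff.mpr ⟨j, rfl⟩⟩)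
  · exact sup_le inf_le_left inf_le_left

include hn hr hco2 in
lemma supA {K L : Subgroup (ZM m n r)} (hK : K.Normal) (hL : L.Normal) :
    (K ⊔ L) ⊓ Subgroup.zpowers a ≤ (K ⊓ Subgroup.zpowers a) ⊔ (L ⊓ Subgroup.zpowers a) := by
  rintro g ⟨hg1, hg2⟩
  haveI := hL
  have hset : g ∈ ((K : Set (ZM m n r)) * (L : Set (ZM m n r))) := by
    rw [← Subgroup.mul_normal K L]; exact hg1
  obtain ⟨k, hk, l, hl, hkl⟩ := hset
  obtain ⟨i1, j1, rfl⟩ := normal_form hn hr k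
  obtain ⟨i2, j2, rfl⟩ := normal_form hn hr l
  obtain ⟨hK1, hK2⟩ := mem_parts hn hr hco2 hK hk
  obtain ⟨hL1, hL2⟩ := mem_parts hn hr hco2 hL hl
  obtain ⟨s, t, hconj, hst⟩ := ZMwork.conj_gen rel_a rel_c hr hn j1
  have hG : g = a ^ (i1 + i2*s) * b ^ (j1+j2) := by
    rw [← hkl]
    calc (a^i1*b^j1) * (a^i2*b^j2)
        = a^i1 * (b^j1 * a^i2 * b^(-j1)) * b^(j1+j2) := by group
      _ = a^i1 * a^(i2*s) * b^(j1+j2) := by rw [hconj]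
      _ = a ^ (i1 + i2*s) * b ^ (j1+j2) := by rw [← zpow_add]
  obtain ⟨w, hw⟩ := Subgroup.mem_zpowers_iff.mp hg2
  have h1 : a ^ (i1 + i2*s - w) * b ^ (j1+j2) = 1 := by
    calc a ^ (i1+i2*s-w) * b^(j1+j2)
        = a^(-w) * (a^(i1+i2*s) * b^(j1+j2)) := by
          rw [← mul_assoc, ← zpow_add]; congr 2 <;> ring
      _ = a^(-w) * g := by rw [← hG]
      _ = a^(-w) * a^w := by rw [← hw]
      _ = 1 := by rw [← zpow_add]; simp
  obtain ⟨-, hb1⟩ := mix_one h1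
  have hg3 : g = a^i1 * a^(i2*s) := by
    rw [hG, hb1, mul_one, zpow_add]
  rw [hg3]
  apply Subgroup.mul_mem
  · exact Subgroup.mem_sup_left ⟨hK1, Subgroup.mem_zpowers_iff.mpr ⟨i1, rfl⟩⟩
  · have hLmem : a^(i2*s) ∈ L := by rw [zpow_mul]; exact L.zpow_mem hL1 s
    exact Subgroup.mem_sup_right ⟨hLmem, Subgroup.mem_zpowers_iff.mpr ⟨i2*s, rfl⟩⟩

include hn hr hco2 in
lemma supB {K L : Subgroup (ZM m n r)} (hK : K.Normal) (hL : L.Normal) :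
    (K ⊔ L) ⊓ Subgroup.zpowers b ≤ (K ⊓ Subgroup.zpowers b) ⊔ (L ⊓ Subgroup.zpowers b) := by
  rintro g ⟨hg1, hg2⟩
  haveI := hL
  have hset : g ∈ ((K : Set (ZM m n r)) * (L : Set (ZM m n r))) := by
    rw [← Subgroup.mul_normal K L]; exact hg1
  obtain ⟨k, hk, l, hl, hkl⟩ := hset
  obtain ⟨i1, j1, rfl⟩ := normal_form hn hr k
  obtain ⟨i2, j2, rfl⟩ := normal_form hn hr l
  obtain ⟨hK1, hK2⟩ := mem_parts hn hr hco2 hK hk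
  obtain ⟨hL1, hL2⟩ := mem_parts hn hr hco2 hL hl
  obtain ⟨s, t, hconj, hst⟩ := ZMwork.conj_gen rel_a rel_c hr hn j1
  have hG : g = a ^ (i1 + i2*s) * b ^ (j1+j2) := by
    rw [← hkl]
    calc (a^i1*b^j1) * (a^i2*b^j2)
        = a^i1 * (b^j1 * a^i2 * b^(-j1)) * b^(j1+j2) := by group
      _ = a^i1 * a^(i2*s) * b^(j1+j2) := by rw [hconj]
      _ = a ^ (i1 + i2*s) * b ^ (j1+j2) := by rw [← zpow_add]
  obtain ⟨w, hw⟩ := Subgroup.mem_zpowers_iff.mp hg2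
  have h1 : a ^ (i1 + i2*s) * b ^ (j1+j2-w) = 1 := by
    calc a ^ (i1+i2*s) * b^(j1+j2-w)
        = (a^(i1+i2*s) * b^(j1+j2)) * b^(-w) := by
          rw [mul_assoc, ← zpow_add]; congr 2 <;> ring
      _ = g * b^(-w) := by rw [← hG]
      _ = b^w * b^(-w) := by rw [← hw]
      _ = 1 := by rw [← zpow_add]; simp
  obtain ⟨ha1, -⟩ := mix_one h1
  have hg3 : g = b^j1 * b^j2 := by
    rw [hG, ha1, one_mul, zpow_add]
  rw [hg3]
  exact Subgroup.mul_mem _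
    (Subgroup.mem_sup_left ⟨hK2, Subgroup.mem_zpowers_iff.mpr ⟨j1, rfl⟩⟩)
    (Subgroup.mem_sup_right ⟨hL2, Subgroup.mem_zpowers_iff.mpr ⟨j2, rfl⟩⟩)

end ZMwork

theorem stmt11 (m n : ℕ) (r : ℤ) (hm : 0 < m) (hn : 0 < n)
    (hco : Nat.Coprime m n) (hco2 : IsCoprime (m : ℤ) (r - 1))
    (hr : (m : ℤ) ∣ r ^ n - 1) :
    ∀ H K L : Subgroup (ZM m n r), H.Normal → K.Normal → L.Normal →
      H ⊓ (K ⊔ L) = (H ⊓ K) ⊔ (H ⊓ L) := by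
  intro H K L hH hK hL
  haveI := hH; haveI := hK; haveI := hL
  set a := ZMa m n r
  set b := ZMb m n r
  set A := Subgroup.zpowers a with hA
  set B := Subgroup.zpowers b with hB
  have hN : (H ⊓ (K ⊔ L)).Normal := Subgroup.normal_inf_normal H (K ⊔ L)
  apply le_antisymm
  · have hdec := ZMwork.decomp hn hr hco2 hN
    rw [hdec]
    have hsmall : ∀ P Q : Subgroup (ZM m n r),
        (H ⊓ A) ⊓ (P ⊓ A) ≤ H ⊓ P :=
      fun P Q => le_inf (inf_le_left.trans inf_le_left) (inf_le_right.trans inf_le_left)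
    have hsmallB : ∀ P Q : Subgroup (ZM m n r),
        (H ⊓ B) ⊓ (P ⊓ B) ≤ H ⊓ P :=
      fun P Q => le_inf (inf_le_left.trans inf_le_left) (inf_le_right.trans inf_le_left)
    apply sup_le
    · calc (H ⊓ (K ⊔ L)) ⊓ A
          ≤ (H ⊓ A) ⊓ ((K ⊓ A) ⊔ (L ⊓ A)) := by
            apply le_inf
            · exact inf_le_inf_right A inf_le_left
            · exact (inf_le_inf_right A inf_le_right).trans (ZMwork.supA hn hr hco2 hK hL)
        _ ≤ ((H ⊓ A) ⊓ (K ⊓ A)) ⊔ ((H ⊓ A) ⊓ (L ⊓ A)) :=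
            ZMwork.distrib_zpowers a inf_le_right inf_le_right inf_le_right
        _ ≤ (H ⊓ K) ⊔ (H ⊓ L) := sup_le_sup (hsmall K K) (hsmall L L)
    · calc (H ⊓ (K ⊔ L)) ⊓ B
          ≤ (H ⊓ B) ⊓ ((K ⊓ B) ⊔ (L ⊓ B)) := by
            apply le_inf
            · exact inf_le_inf_right B inf_le_left
            · exact (inf_le_inf_right B inf_le_right).trans (ZMwork.supB hn hr hco2 hK hL)
        _ ≤ ((H ⊓ B) ⊓ (K ⊓ B)) ⊔ ((H ⊓ B) ⊓ (L ⊓ B)) :=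
            ZMwork.distrib_zpowers b inf_le_right inf_le_right inf_le_right
        _ ≤ (H ⊓ K) ⊔ (H ⊓ L) := sup_le_sup (hsmallB K K) (hsmallB L L)
  · exact sup_le (le_inf inf_le_left (inf_le_right.trans le_sup_left))
      (le_inf inf_le_left (inf_le_right.trans le_sup_right))
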